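/- arXiv:1810.13406 — 2 statements merged into one kernel-verified Lean document; each statement's English description precedes it below -/
import Mathlib

section
/- Consider the two-term complex C : R → R over R = ℚ[U₁,U₂]/(U₁U₂) whose differential is multiplication by 2U₁ + 2U₂. Then H₁(C) = 0 and H₀(C) ≅ ℚ[X]/(X²) as ℚ-vector spaces (so the total homology of the complex C₁±₁(𝒰₂) for the unknot is isomorphic to A). -/
open MvPolynomial

/-- The ring `R = ℚ[U₁,U₂]/(U₁U₂)`, the cycle module of the unknot diagram `𝒰₂`. -/
noncomputable abbrev Runk : Type :=
  MvPolynomial (Fin 2) ℚ ⧸ Ideal.span {(X 0 * X 1 : MvPolynomial (Fin 2) ℚ)}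

noncomputable abbrev u₁ : Runk := Ideal.Quotient.mk _ (X 0)
noncomputable abbrev u₂ : Runk := Ideal.Quotient.mk _ (X 1)


lemma primeX0' : Prime (X 0 : MvPolynomial (Fin 1) ℚ) := by
  rw [← MulEquiv.prime_iff (finSuccEquiv ℚ 0).toMulEquiv]
  show Prime ((finSuccEquiv ℚ 0) (X 0))
  rw [finSuccEquiv_X_zero]
  exact Polynomial.prime_X

lemma primeX0 : Prime (X 0 : MvPolynomial (Fin 2) ℚ) := by
  rw [← MulEquiv.prime_iff (finSuccEquiv ℚ 1).toMulEquiv]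
  show Prime ((finSuccEquiv ℚ 1) (X 0))
  rw [finSuccEquiv_X_zero]
  exact Polynomial.prime_X

lemma primeX1 : Prime (X 1 : MvPolynomial (Fin 2) ℚ) := by
  rw [← MulEquiv.prime_iff (finSuccEquiv ℚ 1).toMulEquiv]
  show Prime ((finSuccEquiv ℚ 1) (X 1))
  have h : (1 : Fin 2) = (0 : Fin 1).succ := rfl
  rw [h, finSuccEquiv_X_succ]
  exact Polynomial.prime_C_iff.2 primeX0'


lemma part1 : ∀ f : Runk, (2 * u₁ + 2 * u₂) * f = 0 → f = 0 := by
  intro f hf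
  obtain ⟨p, rfl⟩ := Ideal.Quotient.mk_surjective f
  rw [Ideal.Quotient.eq_zero_iff_mem, Ideal.mem_span_singleton]
  have hm : (X 0 * X 1 : MvPolynomial (Fin 2) ℚ) ∣ (2 * X 0 + 2 * X 1) * p := by
    rw [← Ideal.mem_span_singleton, ← Ideal.Quotient.eq_zero_iff_mem]
    simpa [map_mul, map_add, map_ofNat] using hf
  have hd0 : ¬ (X 0 : MvPolynomial (Fin 2) ℚ) ∣ (2 * X 0 + 2 * X 1) := by
    rintro ⟨c, hc⟩
    have := congrArg (eval ![(0 : ℚ), 1]) hc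
    simp at this
  have hd1 : ¬ (X 1 : MvPolynomial (Fin 2) ℚ) ∣ (X 0 : MvPolynomial (Fin 2) ℚ) := by
    rintro ⟨c, hc⟩
    have := congrArg (eval ![(1 : ℚ), 0]) hc
    simp at this
  have hp0 : (X 0 : MvPolynomial (Fin 2) ℚ) ∣ p :=
    (primeX0.2.2 _ _ (dvd_trans (dvd_mul_right _ _) hm)).resolve_left hd0
  obtain ⟨q, rfl⟩ := hp0
  have hd1' : ¬ (X 1 : MvPolynomial (Fin 2) ℚ) ∣ (2 * X 0 + 2 * X 1) := by
    rintro ⟨c, hc⟩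
    have := congrArg (eval ![(1 : ℚ), 0]) hc
    simp at this
  have hm1 : (X 1 : MvPolynomial (Fin 2) ℚ) ∣ X 0 * q :=
    (primeX1.2.2 _ _ (dvd_trans (dvd_mul_left _ _) hm)).resolve_left hd1'
  rcases primeX1.2.2 _ _ hm1 with h | h
  · exact absurd h hd1
  · obtain ⟨r, rfl⟩ := h
    exact ⟨r, by ring⟩

open TrivSqZeroExt in
noncomputable def φ : MvPolynomial (Fin 2) ℚ →ₐ[ℚ] DualNumber ℚ :=
  aeval ![DualNumber.eps, -DualNumber.eps]

lemma φ_X0 : φ (X 0) = DualNumber.eps := by simp [φ]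
lemma φ_X1 : φ (X 1) = -DualNumber.eps := by simp [φ]

lemma mem_aux (p : MvPolynomial (Fin 2) ℚ) :
    ∃ a b : ℚ, p - (C a + C b * X 0) ∈
      Ideal.span {(X 0 * X 1 : MvPolynomial (Fin 2) ℚ), (X 0 + X 1 : MvPolynomial (Fin 2) ℚ)} := by
  set S : Ideal (MvPolynomial (Fin 2) ℚ) :=
    Ideal.span {(X 0 * X 1 : MvPolynomial (Fin 2) ℚ), (X 0 + X 1 : MvPolynomial (Fin 2) ℚ)} with hS
  have hg1 : (X 0 * X 1 : MvPolynomial (Fin 2) ℚ) ∈ S := Ideal.subset_span (by simp)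
  have hg2 : (X 0 + X 1 : MvPolynomial (Fin 2) ℚ) ∈ S := Ideal.subset_span (by simp)
  have hX2 : (X 0 * X 0 : MvPolynomial (Fin 2) ℚ) ∈ S := by
    have := Ideal.sub_mem _ (Ideal.mul_mem_left _ (X 0) hg2) hg1
    convert this using 1; ring
  induction p using MvPolynomial.induction_on with
  | C a => exact ⟨a, 0, by simpa using S.zero_mem⟩
  | add p q hp hq =>
    obtain ⟨a, b, hp⟩ := hp
    obtain ⟨c, d, hq⟩ := hq
    refine ⟨a + c, b + d, ?_⟩
    have := Ideal.add_mem _ hp hq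
    convert this using 1
    rw [C_add, C_add]; ring
  | mul_X p i hp =>
    obtain ⟨a, b, hp⟩ := hp
    fin_cases i <;> simp only [Fin.zero_eta, Fin.mk_one]
    · refine ⟨0, a, ?_⟩
      have := Ideal.add_mem _ (Ideal.mul_mem_right (X 0) _ hp) (Ideal.mul_mem_left _ (C b) hX2)
      convert this using 1
      rw [C_0]; ring
    · refine ⟨0, -a, ?_⟩
      have := Ideal.add_mem _ (Ideal.add_mem _ (Ideal.mul_mem_right (X 1) _ hp)
        (Ideal.mul_mem_left _ (C b) hg1)) (Ideal.mul_mem_left _ (C a) hg2)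
      convert this using 1
      rw [C_0, C_neg]; ring

lemma ker_aux (p : MvPolynomial (Fin 2) ℚ) (h : φ p = 0) :
    p ∈ Ideal.span {(X 0 * X 1 : MvPolynomial (Fin 2) ℚ), (X 0 + X 1 : MvPolynomial (Fin 2) ℚ)} := by
  obtain ⟨a, b, hm⟩ := mem_aux p
  rw [Ideal.mem_span_pair] at hm
  obtain ⟨u, v, huv⟩ := hm
  have hp : p = C a + C b * X 0 + (u * (X 0 * X 1) + v * (X 0 + X 1)) := by
    rw [huv]; ring
  have h2 : (algebraMap ℚ (DualNumber ℚ)) a + (algebraMap ℚ (DualNumber ℚ)) b * DualNumber.eps = 0 := by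
    have := h
    rw [hp] at this
    simpa [φ, map_add, map_mul, DualNumber.eps_mul_eps] using this
  have ha : a = 0 := by
    have := congrArg TrivSqZeroExt.fst h2
    simpa [TrivSqZeroExt.algebraMap_eq_inl] using this
  have hb : b = 0 := by
    have := congrArg TrivSqZeroExt.snd h2
    simpa [ha, TrivSqZeroExt.algebraMap_eq_inl] using this
  rw [Ideal.mem_span_pair]
  exact ⟨u, v, by rw [huv, ha, hb]; simp⟩

noncomputable def ψ₁ : Runk →ₐ[ℚ] DualNumber ℚ :=
  Ideal.Quotient.liftₐ _ φ (by
    intro a ha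
    rw [Ideal.mem_span_singleton] at ha
    obtain ⟨c, rfl⟩ := ha
    rw [map_mul, map_mul, φ_X0, φ_X1]
    simp [DualNumber.eps_mul_eps])

lemma ψ₁_mk (p : MvPolynomial (Fin 2) ℚ) : ψ₁ (Ideal.Quotient.mk _ p) = φ p := rfl

noncomputable def ψ₂ : (Runk ⧸ Ideal.span {(2 * u₁ + 2 * u₂ : Runk)}) →ₐ[ℚ] DualNumber ℚ :=
  Ideal.Quotient.liftₐ _ ψ₁ (by
    intro a ha
    rw [Ideal.mem_span_singleton] at ha
    obtain ⟨c, rfl⟩ := ha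
    rw [map_mul]
    have : ψ₁ (2 * u₁ + 2 * u₂) = 0 := by
      rw [map_add, map_mul, map_mul, ψ₁_mk, ψ₁_mk, φ_X0, φ_X1]
      ring
    rw [this, zero_mul])

lemma ψ₂_bij : Function.Bijective ψ₂ := by
  constructor
  · rw [injective_iff_map_eq_zero]
    intro x hx
    obtain ⟨q, rfl⟩ := Ideal.Quotient.mk_surjective x
    obtain ⟨p, rfl⟩ := Ideal.Quotient.mk_surjective q
    have hφ : φ p = 0 := hx
    have hmem := ker_aux p hφ
    rw [Ideal.mem_span_pair] at hmem
    obtain ⟨u, v, huv⟩ := hmem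
    rw [Ideal.Quotient.eq_zero_iff_mem]
    have hspan : Ideal.span {(2 * u₁ + 2 * u₂ : Runk)} = Ideal.span {(u₁ + u₂ : Runk)} := by
      have h2 : IsUnit (2 : Runk) := by
        have h2' := (isUnit_iff_ne_zero.2 (two_ne_zero (α := ℚ))).map (algebraMap ℚ Runk)
        rwa [map_ofNat] at h2'
      rw [show (2 * u₁ + 2 * u₂ : Runk) = 2 * (u₁ + u₂) by ring,
        Ideal.span_singleton_mul_left_unit h2]
    rw [hspan, Ideal.mem_span_singleton']
    refine ⟨Ideal.Quotient.mk _ v, ?_⟩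
    have : Ideal.Quotient.mk (Ideal.span {(X 0 * X 1 : MvPolynomial (Fin 2) ℚ)})
        (v * (X 0 + X 1)) = Ideal.Quotient.mk _ p := by
      rw [← huv]
      rw [Ideal.Quotient.eq]
      rw [Ideal.mem_span_singleton]
      exact ⟨-u, by ring⟩
    rw [← this, RingHom.map_mul, RingHom.map_add]
  · intro z
    refine ⟨Ideal.Quotient.mk _ (Ideal.Quotient.mk _ (C z.fst + C z.snd * X 0)), ?_⟩
    have : ψ₂ (Ideal.Quotient.mk _ (Ideal.Quotient.mk _ (C z.fst + C z.snd * X 0)))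
        = algebraMap ℚ (DualNumber ℚ) z.fst + algebraMap ℚ (DualNumber ℚ) z.snd * DualNumber.eps := by
      show φ (C z.fst + C z.snd * X 0) = _
      rw [map_add, map_mul, φ_X0]
      simp [φ]
    rw [this]
    ext
    · simp [TrivSqZeroExt.algebraMap_eq_inl']
    · simp [TrivSqZeroExt.algebraMap_eq_inl']

/-- For the two-term complex `C : R → R` over `R = ℚ[U₁,U₂]/(U₁U₂)` with
differential multiplication by `2U₁ + 2U₂`, we have `H₁(C) = 0` (the differential is
injective) and `H₀(C) = R/(2U₁+2U₂) ≅ ℚ[X]/(X²)` as ℚ-vector spaces. -/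
theorem stmt6 :
    (∀ f : Runk, (2 * u₁ + 2 * u₂) * f = 0 → f = 0) ∧
    Nonempty ((Runk ⧸ Ideal.span {(2 * u₁ + 2 * u₂ : Runk)}) ≃ₗ[ℚ] DualNumber ℚ) := by
  exact ⟨part1, ⟨(AlgEquiv.ofBijective ψ₂ ψ₂_bij).toLinearEquiv⟩⟩
end

section
/- Let A = ℚ[X]/(X²), graded with 1 in degree 1 and X in degree −1, and give A ⊗ A the tensor grading. Regard A ⊗ A and A as modules over ℚ[X₁,X₂] where on A ⊗ A the variables act as X⊗1 and 1⊗X respectively, and on A both X₁ and X₂ act as multiplication by X. Then every ℚ[X₁,X₂]-module homomorphism f : A ⊗ A → A that is homogeneous of degree −1 is a scalar multiple of the multiplication map m. -/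
open TensorProduct

local notation "A" => DualNumber ℚ
local notation "εq" => (DualNumber.eps : DualNumber ℚ)

/-- Grade `A = ℚ[X]/(X²)` with `1` in degree `1` and `X` in degree `−1`,
and give `A ⊗ A` the tensor grading (so `1⊗1` has degree `2`, `X⊗1` and `1⊗X` degree `0`,
`X⊗X` degree `−2`).  Regard `A ⊗ A` and `A` as `ℚ[X₁,X₂]`-modules, `X₁, X₂` acting as
`X⊗1, 1⊗X` on `A ⊗ A` and both as `X` on `A`.  Then every `ℚ[X₁,X₂]`-module
homomorphism `f : A ⊗ A → A` which is homogeneous of degree `−1` (i.e. it takes each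
graded piece of `A ⊗ A` of degree `d` into the piece of `A` of degree `d − 1`) is a
scalar multiple of the multiplication map `m`. -/
theorem stmt15 (f : (A ⊗[ℚ] A) →ₗ[ℚ] A)
    -- `f` is `ℚ[X₁,X₂]`-linear:
    (hf₁ : ∀ x : A ⊗[ℚ] A, f ((εq ⊗ₜ 1) * x) = εq * f x)
    (hf₂ : ∀ x : A ⊗[ℚ] A, f ((1 ⊗ₜ εq) * x) = εq * f x)
    -- `f` is homogeneous of degree `−1`:
    (hdeg₂ : ∃ c : ℚ, f (1 ⊗ₜ 1) = c • (1 : A))          -- degree 2 ↦ degree 1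
    (hdeg₀ : (∃ c : ℚ, f (εq ⊗ₜ 1) = c • εq) ∧
             (∃ c : ℚ, f (1 ⊗ₜ εq) = c • εq))            -- degree 0 ↦ degree −1
    (hdegm₂ : f (εq ⊗ₜ εq) = 0) :                        -- degree −2 ↦ degree −3 = 0
    ∃ r : ℚ, ∀ x : A ⊗[ℚ] A, f x = r • LinearMap.mul' ℚ A x := by
  obtain ⟨c, hc⟩ := hdeg₂
  have he1 : f (εq ⊗ₜ 1) = c • εq := by
    have h := hf₁ 1
    rw [mul_one, Algebra.TensorProduct.one_def, hc] at h
    rw [h, mul_smul_comm, mul_one]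
  have h1e : f (1 ⊗ₜ εq) = c • εq := by
    have h := hf₂ 1
    rw [mul_one, Algebra.TensorProduct.one_def, hc] at h
    rw [h, mul_smul_comm, mul_one]
  refine ⟨c, fun x => ?_⟩
  induction x using TensorProduct.induction_on with
  | zero => simp only [map_zero, smul_zero]
  | add x y hx hy => simp [hx, hy, smul_add]
  | tmul a b =>
    rw [← TrivSqZeroExt.inl_fst_add_inr_snd_eq a, ← TrivSqZeroExt.inl_fst_add_inr_snd_eq b]
    have ha : (TrivSqZeroExt.inl a.fst : A) = a.fst • 1 := by
      ext <;> simp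
    have hb : (TrivSqZeroExt.inl b.fst : A) = b.fst • 1 := by
      ext <;> simp
    rw [DualNumber.inr_eq_smul_eps, DualNumber.inr_eq_smul_eps, ha, hb,
      TensorProduct.add_tmul, TensorProduct.tmul_add, TensorProduct.tmul_add]
    simp only [← TensorProduct.smul_tmul', TensorProduct.tmul_smul, map_add, map_smul,
      hc, he1, h1e, hdegm₂, LinearMap.mul'_apply, one_mul, mul_one, smul_mul_assoc,
      mul_smul_comm, DualNumber.eps_mul_eps, smul_add, smul_smul, smul_zero, add_zero]
    module
end
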